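/- Let (C,d) be a metric space with diameter at most 2 and X = 𝒞_{x₀}([0,1],C) with the metric D((a,c₁),(b,c₂)) = |a−b| + min(a,b)·d(c₁,c₂), D((a,c),x₀)=a. Then the boundary of the open ball B_D(x₀;1) is exactly the set {1}×C. -/

import Mathlib

open Set Topology

/-- The relation on `[0,1] × C` identifying `{0} × C` to a point. -/
def coneSetoid (C : Type*) : Setoid (Set.Icc (0 : ℝ) 1 × C) where
  r p q := p = q ∨ (p.1.1 = 0 ∧ q.1.1 = 0)
  iseqv := by
    refine ⟨fun p => Or.inl rfl, ?_, ?_⟩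
    · rintro p q (rfl | ⟨h1, h2⟩)
      · exact Or.inl rfl
      · exact Or.inr ⟨h2, h1⟩
    · rintro p q r (rfl | ⟨h1, h2⟩) (rfl | ⟨h3, h4⟩)
      · exact Or.inl rfl
      · exact Or.inr ⟨h3, h4⟩
      · exact Or.inr ⟨h1, h2⟩
      · exact Or.inr ⟨h1, h4⟩

/-- The cone `𝒞_{x₀}([0,1], C)`: the quotient of `[0,1] × C` collapsing `{0} × C`. -/
def Cone (C : Type*) : Type _ := Quotient (coneSetoid C)

instance (C : Type*) [TopologicalSpace C] : TopologicalSpace (Cone C) :=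
  inferInstanceAs (TopologicalSpace (Quotient (coneSetoid C)))

/-- The apex of the cone. -/
noncomputable def conePt (C : Type*) [Nonempty C] : Cone C :=
  Quotient.mk (coneSetoid C) (⟨0, by norm_num⟩, Classical.arbitrary C)


/-- The height function on the cone. -/
noncomputable def coneHt {C : Type*} : Cone C → ℝ :=
  Quotient.lift (fun p : Set.Icc (0 : ℝ) 1 × C => p.1.1) (by
    rintro p q (rfl | ⟨h1, h2⟩)
    · rfl
    · simp [h1, h2])

lemma coneHt_cont {C : Type*} [TopologicalSpace C] : Continuous (coneHt (C := C)) := by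
  apply Continuous.quotient_lift
  exact continuous_subtype_val.comp continuous_fst

/-- The boundary of the open ball `B_D(x₀; 1)` in the cone is exactly `{1} × C`. -/
theorem stmt_10 {C : Type*} [MetricSpace C] [Nonempty C]
    (hdiam : ∀ c₁ c₂ : C, dist c₁ c₂ ≤ 2)
    (D : Cone C → Cone C → ℝ)
    (hD : ∀ (a b : Set.Icc (0 : ℝ) 1) (c₁ c₂ : C),
      D (Quotient.mk (coneSetoid C) (a, c₁)) (Quotient.mk (coneSetoid C) (b, c₂)) =
        |a.1 - b.1| + min a.1 b.1 * dist c₁ c₂) :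
    frontier {y : Cone C | D (conePt C) y < 1} =
      {y : Cone C | ∃ c : C,
        y = Quotient.mk (coneSetoid C) (⟨1, by norm_num⟩, c)} := by

  classical
  have hgmk : ∀ (a : Set.Icc (0:ℝ) 1) (c : C),
      coneHt (Quotient.mk (coneSetoid C) (a, c)) = a.1 := fun a c => rfl
  have hDg : ∀ y, D (conePt C) y = coneHt y := by
    intro y
    induction y using Quotient.ind with
    | _ p =>
      obtain ⟨a, c⟩ := p
      rw [conePt, hD, hgmk]
      have h0 : min (0:ℝ) a.1 = 0 := min_eq_left a.2.1
      rw [h0, zero_mul, add_zero, zero_sub, abs_neg, abs_of_nonneg a.2.1]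
  have hS : {y : Cone C | D (conePt C) y < 1} = coneHt ⁻¹' (Set.Iio 1) := by
    ext y; simp [hDg]
  have hopen : IsOpen {y : Cone C | D (conePt C) y < 1} := by
    rw [hS]; exact isOpen_Iio.preimage coneHt_cont
  have hle : ∀ y : Cone C, coneHt y ≤ 1 := by
    intro y
    induction y using Quotient.ind with
    | _ p => exact p.1.2.2
  ext y
  rw [hopen.frontier_eq, hS]
  constructor
  · rintro ⟨hycl, hynot⟩
    have h1 : coneHt y = 1 := le_antisymm (hle y) (not_lt.mp (by simpa using hynot))
    revert h1
    induction y using Quotient.ind with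
    | _ p =>
      obtain ⟨a, c⟩ := p
      intro h1
      refine ⟨c, ?_⟩
      congr 1
      exact Prod.ext (Subtype.ext h1) rfl
  · rintro ⟨c, rfl⟩
    constructor
    · -- in the closure: approximate by mk (1 - 1/(n+1), c)
      have hmem : ∀ n : ℕ, (1 - 1/(n+1) : ℝ) ∈ Set.Icc (0:ℝ) 1 := by
        intro n
        constructor
        · have : (1 : ℝ)/(n+1) ≤ 1 := by
            rw [div_le_one (by positivity)]
            linarith [Nat.cast_nonneg (α := ℝ) n]
          linarith
        · have : (0:ℝ) < 1/(n+1) := by positivity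
          linarith
      set f : ℕ → Cone C := fun n =>
        Quotient.mk (coneSetoid C) (⟨1 - 1/(n+1), hmem n⟩, c) with hf
      have htend : Filter.Tendsto f Filter.atTop
          (𝓝 (Quotient.mk (coneSetoid C) (⟨1, by norm_num⟩, c))) := by
        apply (continuous_quotient_mk'.tendsto _).comp
        apply Filter.Tendsto.prodMk_nhds _ tendsto_const_nhds
        rw [tendsto_subtype_rng]
        have : Filter.Tendsto (fun n : ℕ => (1 - 1/(n+1) : ℝ)) Filter.atTop (𝓝 (1 - 0)) :=
          tendsto_const_nhds.sub tendsto_one_div_add_atTop_nhds_zero_nat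
        simpa using this
      refine mem_closure_of_tendsto htend ?_
      filter_upwards with n
      show coneHt (f n) < 1
      rw [hf]
      show (1 - 1/(n+1) : ℝ) < 1
      have : (0:ℝ) < 1/(n+1) := by positivity
      linarith
    · show ¬ (coneHt _ < 1)
      show ¬ ((1:ℝ) < 1)
      exact lt_irrefl 1
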